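/- Let v(g₀, g₁, (fᵢ)) ∈ T_{(g₀,g₁)}G² be the 'net force' vector Σᵢ s_{tᵢ}((d_{(g₀,g₁)}γ_{tᵢ})^{-1}(Log_{γ_{tᵢ}(g₀,g₁)}(fᵢ))) with s_t(v,w) = ((1−t)²v, t²w). Then v ∘ L_h = dL_h ∘ v for all h ∈ G, where L_h denotes joint left translation on all arguments. -/

import Mathlib

section

variable {E : Type*} [NormedAddCommGroup E] [NormedSpace ℝ E]
  {H : Type*} [TopologicalSpace H] (I : ModelWithCorners ℝ E H)
  {G : Type*} [TopologicalSpace G] [ChartedSpace H G] [Group G]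

/-- Geodesic of the canonical Cartan–Schouten connection between `g₀` and `g₁`:
`γ(t; g₀, g₁) = g₀ · exp(t · log(g₀⁻¹ g₁))`, for abstract group exponential and
logarithm. -/
def ccsGeodesic (expm : E → G) (logm : G → E) (t : ℝ) (g₀ g₁ : G) : G :=
  g₀ * expm (t • logm (g₀⁻¹ * g₁))

/-- Connection logarithm of the CCS connection: `Log_g(f) = d_e L_g (log(g⁻¹ f))`. -/
noncomputable def ccsLog [LieGroup I ((⊤ : ℕ∞) : WithTop ℕ∞) G] (logm : G → E) (g f : G) :
    TangentSpace I g :=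
  mfderiv I I (fun x : G => g * x) (1 : G) (logm (g⁻¹ * f))


lemma aux_geo (expm : E → G) (logm : G → E) (t : ℝ) (h x g₁ : G) :
    ccsGeodesic expm logm t (h*x) (h*g₁) = h * ccsGeodesic expm logm t x g₁ := by
  simp [ccsGeodesic, mul_assoc]

lemma aux_mdiff [LieGroup I ((⊤ : ℕ∞) : WithTop ℕ∞) G] (a : G) : MDifferentiable I I (fun x : G => a * x) :=
  (contMDiff_mul_left (n := ((⊤ : ℕ∞) : WithTop ℕ∞)) (a := a)).mdifferentiable (by simp)

lemma aux_log [LieGroup I ((⊤ : ℕ∞) : WithTop ℕ∞) G] (logm : G → E) (h g f : G) :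
    ccsLog I logm (h*g) (h*f) = mfderiv I I (fun x : G => h * x) g (ccsLog I logm g f) := by
  have h1 : (fun x : G => (h*g) * x) = (fun x : G => h * x) ∘ (fun x : G => g * x) := by
    funext x; simp [mul_assoc]
  unfold ccsLog
  rw [h1, mfderiv_comp (1:G) (aux_mdiff I h _) (aux_mdiff I g _)]
  have h2 : mfderiv I I (fun x : G => h * x) ((fun x : G => g * x) 1)
      = mfderiv I I (fun x : G => h * x) g := mfderiv_congr_point (mul_one g)
  rw [h2]
  rw [show (h * g)⁻¹ * (h * f) = g⁻¹ * f by group]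
  rfl

lemma aux_key {A B : E →L[ℝ] E} {P Q : E ≃L[ℝ] E}
    (hcomm : (Q : E →L[ℝ] E).comp A = B.comp (P : E →L[ℝ] E)) (w : E) :
    Q.symm (B w) = A (P.symm w) := by
  have h2 := DFunLike.congr_fun hcomm (P.symm w)
  apply Q.injective
  simp only [ContinuousLinearMap.comp_apply, ContinuousLinearEquiv.coe_coe] at h2
  simp [h2]

lemma aux_mdiff_of_equiv [LieGroup I ((⊤ : ℕ∞) : WithTop ℕ∞) G] [Nontrivial E] {f : G → G} {x : G} {P : E ≃L[ℝ] E}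
    (hP : (P : E →L[ℝ] E) = mfderiv I I f x) : MDifferentiableAt I I f x := by
  by_contra hc
  rw [mfderiv_zero_of_not_mdifferentiableAt hc] at hP
  obtain ⟨y, hy⟩ := exists_ne (0 : E)
  have : (P : E →L[ℝ] E) y = 0 := by rw [hP]; rfl
  exact hy (P.map_eq_zero_iff.mp (by simpa using this))


/-- Let `v(g₀, g₁, (fᵢ)) ∈ T_{(g₀,g₁)}G²` be the "net force" vector
`Σᵢ s_{tᵢ}((d_{(g₀,g₁)}γ_{tᵢ})⁻¹(Log_{γ_{tᵢ}(g₀,g₁)}(fᵢ)))` with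
`s_t(v,w) = ((1−t)²v, t²w)`, where the (componentwise) invertibility of the partial
differentials of the geodesic boundary map is encoded by the continuous linear
equivalences `D₀ i, D₁ i` (at `(g₀,g₁)`) and `D₀' i, D₁' i` (at `(hg₀,hg₁)`).
Then `v ∘ L_h = dL_h ∘ v` for all `h ∈ G`: each component of the net-force vector of the
jointly left-translated configuration is the image under `d L_h` of the corresponding
component of the original net-force vector. -/
theorem stmt11 [LieGroup I ((⊤ : ℕ∞) : WithTop ℕ∞) G] (expm : E → G) (logm : G → E)
    (N : ℕ) (f : Fin N → G) (t : Fin N → ℝ) (ht : ∀ i, t i ∈ Set.Icc (0 : ℝ) 1)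
    (g₀ g₁ h : G)
    (D₀ D₁ D₀' D₁' : Fin N → (E ≃L[ℝ] E))
    (hD₀ : ∀ i, (D₀ i : E →L[ℝ] E)
      = mfderiv I I (fun x : G => ccsGeodesic expm logm (t i) x g₁) g₀)
    (hD₁ : ∀ i, (D₁ i : E →L[ℝ] E)
      = mfderiv I I (fun y : G => ccsGeodesic expm logm (t i) g₀ y) g₁)
    (hD₀' : ∀ i, (D₀' i : E →L[ℝ] E)
      = mfderiv I I (fun x : G => ccsGeodesic expm logm (t i) x (h * g₁)) (h * g₀))
    (hD₁' : ∀ i, (D₁' i : E →L[ℝ] E)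
      = mfderiv I I (fun y : G => ccsGeodesic expm logm (t i) (h * g₀) y) (h * g₁)) :
    (∑ i, (1 - t i) ^ 2 •
        (D₀' i).symm
          (ccsLog I logm (ccsGeodesic expm logm (t i) (h * g₀) (h * g₁)) (h * f i))
      = mfderiv I I (fun x : G => h * x) g₀
          (∑ i, (1 - t i) ^ 2 •
            (D₀ i).symm (ccsLog I logm (ccsGeodesic expm logm (t i) g₀ g₁) (f i)))) ∧
    (∑ i, (t i) ^ 2 •
        (D₁' i).symm
          (ccsLog I logm (ccsGeodesic expm logm (t i) (h * g₀) (h * g₁)) (h * f i))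
      = mfderiv I I (fun x : G => h * x) g₁
          (∑ i, (t i) ^ 2 •
            (D₁ i).symm (ccsLog I logm (ccsGeodesic expm logm (t i) g₀ g₁) (f i)))) := by
  rcases subsingleton_or_nontrivial E with hE | hE
  · exact ⟨Subsingleton.elim _ _, Subsingleton.elim _ _⟩
  constructor
  · have key : ∀ i, (D₀' i).symm
          (ccsLog I logm (ccsGeodesic expm logm (t i) (h * g₀) (h * g₁)) (h * f i))
        = mfderiv I I (fun x : G => h * x) g₀
            ((D₀ i).symm (ccsLog I logm (ccsGeodesic expm logm (t i) g₀ g₁) (f i))) := by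
      intro i
      have hcomp : (fun x : G => ccsGeodesic expm logm (t i) x (h * g₁)) ∘ (fun x : G => h * x)
          = (fun x : G => h * x) ∘ (fun x : G => ccsGeodesic expm logm (t i) x g₁) := by
        funext x; exact aux_geo expm logm (t i) h x g₁
      have hd1 : MDifferentiableAt I I (fun x : G => ccsGeodesic expm logm (t i) x g₁) g₀ :=
        aux_mdiff_of_equiv I (hD₀ i)
      have hd2 : MDifferentiableAt I I (fun x : G => ccsGeodesic expm logm (t i) x (h * g₁)) (h * g₀) :=
        aux_mdiff_of_equiv I (hD₀' i)
      have hA : MDifferentiableAt I I (fun x : G => h * x) g₀ := (aux_mdiff I h) g₀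
      have e1 := mfderiv_comp (I' := I) g₀ hd2 hA
      have e2 := mfderiv_comp (I' := I) g₀
        (aux_mdiff I h (ccsGeodesic expm logm (t i) g₀ g₁)) hd1
      have hcomm : ((D₀' i : E →L[ℝ] E)).comp
            (mfderiv I I (fun x : G => h * x) g₀ : E →L[ℝ] E)
          = (mfderiv I I (fun x : G => h * x)
              (ccsGeodesic expm logm (t i) g₀ g₁) : E →L[ℝ] E).comp (D₀ i : E →L[ℝ] E) := by
        rw [hD₀' i, hD₀ i]
        have e3 : mfderiv I I ((fun x : G => ccsGeodesic expm logm (t i) x (h * g₁))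
              ∘ (fun x : G => h * x)) g₀ = mfderiv I I ((fun x : G => h * x)
              ∘ (fun x : G => ccsGeodesic expm logm (t i) x g₁)) g₀ := by rw [hcomp]
        exact e1.symm.trans (e3.trans e2)
      rw [aux_geo expm logm (t i) h g₀ g₁,
        aux_log I logm h (ccsGeodesic expm logm (t i) g₀ g₁) (f i)]
      exact aux_key (E := E) hcomm _
    simp only [key]
    symm
    exact (map_sum _ _ _).trans (Finset.sum_congr rfl fun i _ => map_smul _ _ _)
  · have key : ∀ i, (D₁' i).symm
          (ccsLog I logm (ccsGeodesic expm logm (t i) (h * g₀) (h * g₁)) (h * f i))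
        = mfderiv I I (fun x : G => h * x) g₁
            ((D₁ i).symm (ccsLog I logm (ccsGeodesic expm logm (t i) g₀ g₁) (f i))) := by
      intro i
      have hcomp : (fun x : G => ccsGeodesic expm logm (t i) (h * g₀) x) ∘ (fun x : G => h * x)
          = (fun x : G => h * x) ∘ (fun x : G => ccsGeodesic expm logm (t i) g₀ x) := by
        funext x; exact aux_geo expm logm (t i) h g₀ x
      have hd1 : MDifferentiableAt I I (fun x : G => ccsGeodesic expm logm (t i) g₀ x) g₁ :=
        aux_mdiff_of_equiv I (hD₁ i)
      have hd2 : MDifferentiableAt I I (fun x : G => ccsGeodesic expm logm (t i) (h * g₀) x) (h * g₁) :=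
        aux_mdiff_of_equiv I (hD₁' i)
      have hA : MDifferentiableAt I I (fun x : G => h * x) g₁ := (aux_mdiff I h) g₁
      have e1 := mfderiv_comp (I' := I) g₁ hd2 hA
      have e2 := mfderiv_comp (I' := I) g₁
        (aux_mdiff I h (ccsGeodesic expm logm (t i) g₀ g₁)) hd1
      have hcomm : ((D₁' i : E →L[ℝ] E)).comp
            (mfderiv I I (fun x : G => h * x) g₁ : E →L[ℝ] E)
          = (mfderiv I I (fun x : G => h * x)
              (ccsGeodesic expm logm (t i) g₀ g₁) : E →L[ℝ] E).comp (D₁ i : E →L[ℝ] E) := by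
        rw [hD₁' i, hD₁ i]
        have e3 : mfderiv I I ((fun x : G => ccsGeodesic expm logm (t i) (h * g₀) x)
              ∘ (fun x : G => h * x)) g₁ = mfderiv I I ((fun x : G => h * x)
              ∘ (fun x : G => ccsGeodesic expm logm (t i) g₀ x)) g₁ := by rw [hcomp]
        exact e1.symm.trans (e3.trans e2)
      rw [aux_geo expm logm (t i) h g₀ g₁,
        aux_log I logm h (ccsGeodesic expm logm (t i) g₀ g₁) (f i)]
      exact aux_key (E := E) hcomm _
    simp only [key]
    symm
    exact (map_sum _ _ _).trans (Finset.sum_congr rfl fun i _ => map_smul _ _ _)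

end
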